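/- Let F = (f_1 < f_2 < ... < f_k) be an increasing sequence of positive integers with f_1 = 1, and let M = {{1^{m_1}, ..., k^{m_k}}} be a multiset with m_1 + ... + m_k = n - k. Then there exists a restricted growth function ρ of length n with first-occurrence positions F and remaining multiset M if and only if f_i - i ≤ m_1 + m_2 + ... + m_{i-1} for all 2 ≤ i ≤ k. -/

import Mathlib

open Finset

/-- A restricted growth function of length `n`: all values are at least `1`, and
each value is at most one more than the maximum of the previous values
(so in particular the first value is `1`). -/
def IsRGF {n : ℕ} (ρ : Fin n → ℕ) : Prop :=
  (∀ i, 1 ≤ ρ i) ∧ ∀ i : Fin n, ρ i ≤ 1 + (univ.filter (· < i)).sup ρ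

namespace RGFAux

variable {k : ℕ} (f m : Fin k → ℕ)

/-- number of indices `i` with `f i ≤ p`, i.e. first-occurrence positions `< p`. -/
def cnt (p : ℕ) : ℕ := (univ.filter fun i : Fin k => f i ≤ p).card

def Spre (i : Fin k) : ℕ := ∑ j ∈ univ.filter (· < i), m j

def Epre (i : Fin k) : ℕ := Spre m i + m i

def jdx (r : ℕ) : ℕ := (univ.filter fun j : Fin k => Epre m j ≤ r).card

def Rep (p : ℕ) : ℕ := ((Finset.range p).filter fun q => ¬ ∃ i : Fin k, f i = q + 1).card

lemma card_filter_lt (i : Fin k) : (univ.filter (· < i)).card = (i : ℕ) := by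
  rw [show (univ.filter (· < i)) = Finset.Iio i by ext x; simp]
  exact Fin.card_Iio i

lemma card_filter_le (i : Fin k) : (univ.filter (· ≤ i)).card = (i : ℕ) + 1 := by
  rw [show (univ.filter (· ≤ i)) = Finset.Iic i by ext x; simp]
  exact Fin.card_Iic i

variable (hf : StrictMono f) (hfpos : ∀ i, 1 ≤ f i)

section cnt

include hf hfpos in
/-- `cnt` counts exactly the first-occurrence positions `< p`. -/
lemma cnt_eq_card_firsts (p : ℕ) :
    cnt f p = ((Finset.range p).filter fun q => ∃ i : Fin k, f i = q + 1).card := by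
  apply Finset.card_nbij (fun i => f i - 1)
  · intro i hi
    simp only [mem_coe, mem_filter, mem_univ, true_and, mem_range] at hi ⊢
    have := hfpos i
    exact ⟨by omega, ⟨i, by omega⟩⟩
  · intro i hi j hj hij
    simp only [coe_filter, Set.mem_setOf_eq] at hi hj
    simp only [] at hij
    have := hfpos i; have := hfpos j
    have : f i = f j := by omega
    exact hf.injective this
  · intro q hq
    simp only [coe_filter, mem_coe, mem_range, Set.mem_setOf_eq, Set.mem_image] at hq ⊢
    obtain ⟨hqp, i, hi⟩ := hq
    exact ⟨i, by simp [mem_filter]; omega, by omega⟩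

include hf hfpos in
lemma cnt_add_rep (p : ℕ) : cnt f p + Rep f p = p := by
  rw [cnt_eq_card_firsts f hf hfpos, Rep, Finset.card_filter_add_card_filter_not,
    Finset.card_range]

lemma cnt_mono : Monotone (cnt f) := fun p q hpq => by
  apply card_le_card; intro i hi; simp only [mem_filter, mem_univ, true_and] at hi ⊢; omega

include hf hfpos in
lemma cnt_first (i : Fin k) : cnt f (f i - 1) = (i : ℕ) := by
  rw [cnt, show (univ.filter fun j : Fin k => f j ≤ f i - 1) = univ.filter (· < i) by
    ext j; simp only [mem_filter, mem_univ, true_and]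
    rw [← hf.lt_iff_lt]; have := hfpos i; omega]
  exact card_filter_lt i

include hf hfpos in
lemma rep_first (i : Fin k) : Rep f (f i - 1) = f i - 1 - (i : ℕ) := by
  have h1 := cnt_add_rep f hf hfpos (f i - 1)
  have h2 := cnt_first f hf hfpos i
  omega

lemma rep_mono : Monotone (Rep f) := fun p q hpq => by
  exact card_le_card (filter_subset_filter _ (Finset.range_subset_range.2 hpq))

lemma rep_succ_of_not_first (p : ℕ) (h : ¬ ∃ i : Fin k, f i = p + 1) :
    Rep f (p + 1) = Rep f p + 1 := by
  rw [Rep, Finset.range_add_one, Finset.filter_insert, if_pos h, Finset.card_insert_of_notMem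
    (by simp), Rep]

lemma rep_succ_of_first (p : ℕ) (h : ∃ i : Fin k, f i = p + 1) :
    Rep f (p + 1) = Rep f p := by
  rw [Rep, Finset.range_add_one, Finset.filter_insert, if_neg (by simpa using h), Rep]

end cnt

section jdx

lemma Epre_eq (i : Fin k) : Epre m i = ∑ j ∈ univ.filter (· ≤ i), m j := by
  rw [Epre, Spre, show univ.filter (· ≤ i) = insert i (univ.filter (· < i)) by
    ext j; simp only [mem_filter, mem_univ, true_and, mem_insert]
    rw [le_iff_lt_or_eq, or_comm],
    Finset.sum_insert (by simp)]
  ring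

lemma Epre_mono {i j : Fin k} (hij : i ≤ j) : Epre m i ≤ Epre m j := by
  rw [Epre_eq, Epre_eq]
  apply Finset.sum_le_sum_of_subset
  intro x hx; simp only [mem_filter, mem_univ, true_and] at hx ⊢; exact le_trans hx hij

lemma Epre_le_sum (i : Fin k) : Epre m i ≤ ∑ j, m j := by
  rw [Epre_eq]
  exact Finset.sum_le_sum_of_subset (Finset.filter_subset _ _)

lemma Epre_le_Spre {i j : Fin k} (h : j < i) : Epre m j ≤ Spre m i := by
  rw [Epre_eq, Spre]
  apply Finset.sum_le_sum_of_subset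
  intro x hx; simp only [mem_filter, mem_univ, true_and] at hx ⊢; exact lt_of_le_of_lt hx h

lemma Spre_eq_Epre {i j : Fin k} (h : (j : ℕ) + 1 = (i : ℕ)) : Spre m i = Epre m j := by
  rw [Epre_eq, Spre]
  congr 1
  ext x; simp only [mem_filter, mem_univ, true_and, Fin.lt_def, Fin.le_def]; omega

lemma Spre_le_Epre (i : Fin k) : Spre m i ≤ Epre m i := Nat.le_add_right _ _

lemma jdx_mono : Monotone (jdx m) := fun p q hpq => by
  apply card_le_card; intro i hi; simp only [mem_filter, mem_univ, true_and] at hi ⊢; omega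

lemma downset_eq_Iio {K : ℕ} (s : Finset (Fin K))
    (hdc : ∀ a b : Fin K, a ≤ b → b ∈ s → a ∈ s) (h : s.card < K) :
    s = Finset.Iio ⟨s.card, h⟩ := by
  have hsub : s ⊆ Finset.Iio ⟨s.card, h⟩ := by
    intro b hb
    have : Finset.Iic b ⊆ s := fun a ha => hdc a b (by simpa using ha) hb
    have hcard := Finset.card_le_card this
    rw [Fin.card_Iic] at hcard
    simp only [Finset.mem_Iio, Fin.lt_def]
    omega
  exact Finset.eq_of_subset_of_card_le hsub (by rw [Fin.card_Iio])

lemma filter_Epre_downset (r : ℕ) (a b : Fin k) (hab : a ≤ b)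
    (hb : b ∈ univ.filter (Epre m · ≤ r)) : a ∈ univ.filter (Epre m · ≤ r) := by
  simp only [mem_filter, mem_univ, true_and] at hb ⊢
  exact le_trans (Epre_mono m hab) hb

lemma jdx_lt (r : ℕ) (hr : r < ∑ j, m j) : jdx m r < k := by
  rcases Nat.eq_zero_or_pos k with hk | hk
  · subst hk; simp at hr
  by_contra hge
  push_neg at hge
  have huniv : (univ : Finset (Fin k)) ⊆ univ.filter (Epre m · ≤ r) := by
    apply Finset.univ_subset_iff.2
    exact Finset.eq_of_subset_of_card_le (Finset.filter_subset _ _)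
      (by simpa [Finset.card_univ, jdx] using hge)
  have hmem : (⟨k - 1, by omega⟩ : Fin k) ∈ univ.filter (Epre m · ≤ r) :=
    huniv (mem_univ _)
  simp only [mem_filter, mem_univ, true_and] at hmem
  have : (∑ j, m j) ≤ Epre m ⟨k - 1, by omega⟩ := by
    rw [Epre_eq]
    apply Finset.sum_le_sum_of_subset
    intro x _
    simp only [mem_filter, mem_univ, true_and, Fin.le_def]
    omega
  omega

lemma filter_Epre_eq (r : ℕ) (hr : r < ∑ j, m j) :
    univ.filter (Epre m · ≤ r) = Finset.Iio ⟨jdx m r, jdx_lt m r hr⟩ :=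
  downset_eq_Iio _ (filter_Epre_downset m r) _

lemma jdx_spec (r : ℕ) (hr : r < ∑ j, m j) (t : Fin k) (ht : (t : ℕ) = jdx m r) :
    Spre m t ≤ r ∧ r < Epre m t := by
  have hIio : univ.filter (Epre m · ≤ r) = Finset.Iio t := by
    rw [filter_Epre_eq m r hr]; congr 1; exact Fin.ext ht.symm
  constructor
  · rcases Nat.eq_zero_or_pos (t : ℕ) with h0 | h0
    · have hempty : univ.filter (· < t) = (∅ : Finset (Fin k)) := by
        ext j
        simp only [mem_filter, mem_univ, true_and, Finset.notMem_empty, iff_false, not_lt,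
          Fin.le_def]
        omega
      rw [Spre, hempty, Finset.sum_empty]; omega
    · have hkpos : (t : ℕ) - 1 < k := by have := t.isLt; omega
      have hjt : (⟨(t : ℕ) - 1, hkpos⟩ : Fin k) ∈ Finset.Iio t := by
        simp only [Finset.mem_Iio, Fin.lt_def, Fin.val_mk]
        omega
      rw [← hIio] at hjt
      simp only [mem_filter, mem_univ, true_and] at hjt
      have heq : Spre m t = Epre m ⟨(t : ℕ) - 1, hkpos⟩ :=
        Spre_eq_Epre m (by simp only [Fin.val_mk]; omega)
      omega
  · by_contra hle
    push_neg at hle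
    have hmem : t ∈ univ.filter (Epre m · ≤ r) := by
      simp only [mem_filter, mem_univ, true_and]; exact hle
    rw [hIio] at hmem
    simp only [Finset.mem_Iio] at hmem
    exact absurd hmem (lt_irrefl _)

lemma jdx_eq_of (r : ℕ) (i : Fin k) (h1 : Spre m i ≤ r) (h2 : r < Epre m i) :
    jdx m r = (i : ℕ) := by
  have hr : r < ∑ j, m j := lt_of_lt_of_le h2 (Epre_le_sum m i)
  set t : Fin k := ⟨jdx m r, jdx_lt m r hr⟩ with htdef
  have ht : (t : ℕ) = jdx m r := rfl
  obtain ⟨hs, he⟩ := jdx_spec m r hr t ht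
  rcases lt_trichotomy t i with h | h | h
  · have := Epre_le_Spre m h
    omega
  · rw [← ht]; exact congrArg Fin.val h
  · have := Epre_le_Spre m h
    omega

end jdx

/-- discrete IVT for step functions -/
lemma exists_step (g : ℕ → ℕ) (h0 : g 0 = 0) (hstep : ∀ p, g (p + 1) ≤ g p + 1)
    (N r : ℕ) (hr : r < g N) : ∃ p < N, g p = r ∧ g (p + 1) = r + 1 := by
  have hex : ∃ p, r < g p := ⟨N, hr⟩
  classical
  set p0 := Nat.find hex with hp0
  have hp0N : p0 ≤ N := Nat.find_min' hex hr
  have hp0pos : 0 < p0 := by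
    rcases Nat.eq_zero_or_pos p0 with h | h
    · have := Nat.find_spec hex; rw [← hp0, h, h0] at this; omega
    · exact h
  have hnot : ¬ r < g (p0 - 1) := Nat.find_min hex (by omega)
  have hspec : r < g p0 := Nat.find_spec hex
  have hstep' := hstep (p0 - 1)
  rw [show p0 - 1 + 1 = p0 by omega] at hstep'
  refine ⟨p0 - 1, by omega, by omega, ?_⟩
  rw [show p0 - 1 + 1 = p0 by omega]
  omega

section construction

variable (n : ℕ)
variable (hk : 1 ≤ k) (hkn : k ≤ n)
variable (hfone : ∀ i : Fin k, (i : ℕ) = 0 → f i = 1)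
variable (hm : ∑ i, m i = n - k)
variable (H : ∀ i : Fin k, 1 ≤ (i : ℕ) → f i - ((i : ℕ) + 1) ≤ Spre m i)

/-- the RGF constructed from first-occurrence positions `f` and multiplicities `m` -/
noncomputable def rgfOf (p : Fin n) : ℕ :=
  if h : ∃ i : Fin k, f i = (p : ℕ) + 1 then ((h.choose : Fin k) : ℕ) + 1
  else jdx m (Rep f (p : ℕ)) + 1

include hf hfone in
lemma f_ge' : ∀ j (h : j < k), j + 1 ≤ f ⟨j, h⟩ := by
  intro j
  induction j with
  | zero => intro h; rw [hfone ⟨0, h⟩ rfl]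
  | succ j ih =>
    intro h
    have h' : j < k := by omega
    have h1 := hf (show (⟨j, h'⟩ : Fin k) < ⟨j + 1, h⟩ by
      simp only [Fin.lt_def, Fin.val_mk]; omega)
    have h2 := ih h'
    omega

include hf hfone in
lemma f_ge (i : Fin k) : (i : ℕ) + 1 ≤ f i := by
  have := f_ge' f hf hfone (i : ℕ) i.isLt
  simpa using this

include hf hfone in
lemma f_pos (i : Fin k) : 1 ≤ f i := le_trans (by omega) (f_ge f hf hfone i)

lemma Spre_le_sum (i : Fin k) : Spre m i ≤ ∑ j, m j :=
  Finset.sum_le_sum_of_subset (Finset.filter_subset _ _)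

include hk hkn hfone hm H in
lemma f_le_n (i : Fin k) : f i ≤ n := by
  rcases Nat.eq_zero_or_pos (i : ℕ) with h0 | h0
  · rw [hfone i h0]; omega
  · have h1 := H i h0
    have h2 := Spre_le_sum m i
    have h3 := i.isLt
    omega

include hk hkn hfone hm H in
lemma cnt_univ : cnt f n = k := by
  rw [cnt, show (univ.filter fun i : Fin k => f i ≤ n) = univ from
    Finset.filter_true_of_mem fun i _ => f_le_n f m n hk hkn hfone hm H i]
  simp

include hf hk hkn hfone hm H in
lemma rep_n : Rep f n = n - k := by
  have h1 := cnt_add_rep f hf (f_pos f hf hfone) n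
  have h2 := cnt_univ f m n hk hkn hfone hm H
  omega

include hf hk hkn hfone hm H in
lemma rep_lt_sum (p : ℕ) (hp : p < n) (hnf : ¬ ∃ i : Fin k, f i = p + 1) :
    Rep f p < ∑ j, m j := by
  have h1 := rep_succ_of_not_first f p hnf
  have h2 := rep_mono f (show p + 1 ≤ n by omega)
  have h3 := rep_n f m hf n hk hkn hfone hm H
  omega

include hf hk hkn hfone hm H in
/-- the key geometric fact: a repeat position of value `j+1` lies after the first
occurrence of `j+1`. -/
lemma first_le_rep (p : ℕ) (hp : p < n) (hnf : ¬ ∃ i : Fin k, f i = p + 1)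
    (j : Fin k) (hj : (j : ℕ) = jdx m (Rep f p)) : f j ≤ p := by
  have hfpos := f_pos f hf hfone
  have hr := rep_lt_sum f m hf n hk hkn hfone hm H p hp hnf
  obtain ⟨hS, hE⟩ := jdx_spec m (Rep f p) hr j hj
  by_contra hgt
  push_neg at hgt
  rcases Nat.eq_zero_or_pos (j : ℕ) with h0 | h0
  · -- then f j = 1, so p < 1, p = 0, but position 0 is a first occurrence
    have hj1 : f j = 1 := hfone j h0
    exact hnf ⟨j, by omega⟩
  · have h1 := H j h0
    have h2 := rep_first f hf hfpos j
    have h3 := f_ge f hf hfone j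
    have h4 : Rep f p ≤ Rep f (f j - 1) := rep_mono f (by omega)
    -- equality chain forces `p = f j - 1`, contradicting non-firstness
    have h5 : Rep f (p + 1) = Rep f p + 1 := rep_succ_of_not_first f p hnf
    rcases Nat.lt_or_ge p (f j - 1) with h6 | h6
    · have h7 : Rep f (p + 1) ≤ Rep f (f j - 1) := rep_mono f (by omega)
      omega
    · have : p = f j - 1 := by omega
      exact hnf ⟨j, by omega⟩

include hf in
lemma rgfOf_first (i : Fin k) (p : Fin n) (hp : (p : ℕ) + 1 = f i) :
    rgfOf f m n p = (i : ℕ) + 1 := by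
  have h : ∃ i' : Fin k, f i' = (p : ℕ) + 1 := ⟨i, hp.symm⟩
  rw [rgfOf, dif_pos h]
  have hc := h.choose_spec
  have : h.choose = i := hf.injective (by omega)
  rw [this]

lemma rgfOf_rep (p : Fin n) (hp : ¬ ∃ i : Fin k, f i = (p : ℕ) + 1) :
    rgfOf f m n p = jdx m (Rep f (p : ℕ)) + 1 := dif_neg hp

lemma rep_step (p : ℕ) : Rep f (p + 1) ≤ Rep f p + 1 := by
  by_cases h : ∃ i : Fin k, f i = p + 1
  · rw [rep_succ_of_first f p h]; omega
  · rw [rep_succ_of_not_first f p h]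

include hf hk hkn hfone hm H in
lemma rgfOf_first_occ (i : Fin k) :
    ∃ p : Fin n, (p : ℕ) + 1 = f i ∧ rgfOf f m n p = (i : ℕ) + 1 ∧
      ∀ q : Fin n, q < p → rgfOf f m n q ≠ (i : ℕ) + 1 := by
  have hle := f_le_n f m n hk hkn hfone hm H i
  have hpos := f_pos f hf hfone i
  refine ⟨⟨f i - 1, by omega⟩, by simp only [Fin.val_mk]; omega, ?_, ?_⟩
  · exact rgfOf_first f m hf n i _ (by simp only [Fin.val_mk]; omega)
  · intro q hq
    have hlt : (q : ℕ) < f i - 1 := by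
      have := hq
      simp only [Fin.lt_def, Fin.val_mk] at this
      exact this
    by_cases hq1 : ∃ i' : Fin k, f i' = (q : ℕ) + 1
    · obtain ⟨i', hi'⟩ := hq1
      rw [rgfOf_first f m hf n i' q hi'.symm]
      have h2 : i' < i := hf.lt_iff_lt.mp (by omega)
      have h3 : (i' : ℕ) < (i : ℕ) := h2
      omega
    · rw [rgfOf_rep f m n q hq1]
      intro hcontra
      have hj : (i : ℕ) = jdx m (Rep f (q : ℕ)) := by omega
      have := first_le_rep f m hf n hk hkn hfone hm H (q : ℕ) q.isLt hq1 i hj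
      omega

include hf hk hkn hfone hm H in
lemma rgfOf_isRGF : IsRGF (rgfOf f m n) := by
  constructor
  · intro p
    unfold rgfOf
    split <;> omega
  · intro p
    by_cases hp : ∃ i' : Fin k, f i' = (p : ℕ) + 1
    · obtain ⟨i', hi'⟩ := hp
      rw [rgfOf_first f m hf n i' p hi'.symm]
      rcases Nat.eq_zero_or_pos (i' : ℕ) with h0 | h0
      · rw [h0]; omega
      · have hlt'' : (i' : ℕ) - 1 < k := by have := i'.isLt; omega
        set i'' : Fin k := ⟨(i' : ℕ) - 1, hlt''⟩ with hi''
        have hval'' : (i'' : ℕ) = (i' : ℕ) - 1 := rfl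
        have hfi'' : f i'' < f i' := hf (by simp only [Fin.lt_def, hi'', Fin.val_mk]; omega)
        have hpos'' := f_pos f hf hfone i''
        set q : Fin n := ⟨f i'' - 1, by have := p.isLt; omega⟩ with hqdef
        have hqval : (q : ℕ) = f i'' - 1 := rfl
        have hq : rgfOf f m n q = (i'' : ℕ) + 1 :=
          rgfOf_first f m hf n i'' q (by rw [hqval]; omega)
        have hmem : q ∈ univ.filter (· < p) := by
          simp only [mem_filter, mem_univ, true_and, Fin.lt_def, hqval]
          omega
        have hsup := Finset.le_sup (f := rgfOf f m n) hmem
        rw [hq] at hsup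
        omega
    · rw [rgfOf_rep f m n p hp]
      have hr := rep_lt_sum f m hf n hk hkn hfone hm H (p : ℕ) p.isLt hp
      set j : Fin k := ⟨jdx m (Rep f (p : ℕ)), jdx_lt m _ hr⟩ with hjdef
      have hj : (j : ℕ) = jdx m (Rep f (p : ℕ)) := rfl
      have hfj := first_le_rep f m hf n hk hkn hfone hm H (p : ℕ) p.isLt hp j hj
      have hpos := f_pos f hf hfone j
      set q : Fin n := ⟨f j - 1, by have := p.isLt; omega⟩ with hqdef
      have hqval : (q : ℕ) = f j - 1 := rfl
      have hq : rgfOf f m n q = (j : ℕ) + 1 := rgfOf_first f m hf n j q (by rw [hqval]; omega)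
      have hmem : q ∈ univ.filter (· < p) := by
        simp only [mem_filter, mem_univ, true_and, Fin.lt_def, hqval]
        omega
      have hsup := Finset.le_sup (f := rgfOf f m n) hmem
      rw [hq] at hsup
      omega

include hf hk hkn hfone hm H in
lemma rgfOf_count (i : Fin k) :
    (univ.filter fun p : Fin n => rgfOf f m n p = (i : ℕ) + 1).card = m i + 1 := by
  classical
  have hfpos' := f_pos f hf hfone
  have hle := f_le_n f m n hk hkn hfone hm H i
  set A := univ.filter fun p : Fin n => rgfOf f m n p = (i : ℕ) + 1 with hA
  set p₀ : Fin n := ⟨f i - 1, by have := hfpos' i; omega⟩ with hp₀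
  have hp₀val : (p₀ : ℕ) = f i - 1 := rfl
  have h1 : A.filter (fun p : Fin n => ∃ i' : Fin k, f i' = (p : ℕ) + 1) = {p₀} := by
    ext p
    rw [hA, Finset.filter_filter]
    simp only [mem_filter, mem_univ, true_and, Finset.mem_singleton]
    constructor
    · rintro ⟨hval, i', hi'⟩
      rw [rgfOf_first f m hf n i' p hi'.symm] at hval
      have hii : i' = i := Fin.ext (by omega)
      subst hii
      have := hfpos' i'
      exact Fin.ext (by rw [hp₀val]; omega)
    · rintro rfl
      have hfirst : (p₀ : ℕ) + 1 = f i := by rw [hp₀val]; have := hfpos' i; omega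
      exact ⟨rgfOf_first f m hf n i p₀ hfirst, ⟨i, hfirst.symm⟩⟩
  have h2 : (A.filter (fun p : Fin n => ¬ ∃ i' : Fin k, f i' = (p : ℕ) + 1)).card = m i := by
    rw [hA, Finset.filter_filter]
    rw [show m i = (Finset.Ico (Spre m i) (Epre m i)).card by rw [Nat.card_Ico, Epre]; omega]
    apply Finset.card_nbij (fun p : Fin n => Rep f (p : ℕ))
    · intro p hp
      simp only [mem_coe, mem_filter, mem_univ, true_and] at hp
      obtain ⟨hval, hnf⟩ := hp
      rw [rgfOf_rep f m n p hnf] at hval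
      have hr := rep_lt_sum f m hf n hk hkn hfone hm H (p : ℕ) p.isLt hnf
      have hj : (i : ℕ) = jdx m (Rep f (p : ℕ)) := by omega
      obtain ⟨hS, hE⟩ := jdx_spec m _ hr i hj
      exact Finset.mem_Ico.mpr ⟨hS, hE⟩
    · intro p hp q hq hpq
      simp only [coe_filter, Set.mem_setOf_eq] at hp hq
      simp only [] at hpq
      have key : ∀ a b : Fin n, (¬ ∃ i' : Fin k, f i' = (a : ℕ) + 1) → a < b →
          Rep f (a : ℕ) < Rep f (b : ℕ) := by
        intro a b hnf hlt
        have h1 := rep_succ_of_not_first f (a : ℕ) hnf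
        have h2 := rep_mono f (show (a : ℕ) + 1 ≤ (b : ℕ) from hlt)
        omega
      by_contra hne
      rcases lt_or_gt_of_ne (show p ≠ q from hne) with h | h
      · have := key p q hp.2.2 h; omega
      · have := key q p hq.2.2 h; omega
    · intro r hr
      simp only [coe_Ico, Set.mem_Ico] at hr
      have hrs : r < ∑ j, m j := lt_of_lt_of_le hr.2 (Epre_le_sum m i)
      have hRn : Rep f n = n - k := rep_n f m hf n hk hkn hfone hm H
      have hrn : r < Rep f n := by omega
      obtain ⟨p, hpn, hp1, hp2⟩ := exists_step (fun q => Rep f q) (by simp [Rep])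
        (fun q => rep_step f q) n r hrn
      have hnf : ¬ ∃ i' : Fin k, f i' = p + 1 := by
        intro hex
        have := rep_succ_of_first f p hex
        omega
      have hjeq : jdx m r = (i : ℕ) := jdx_eq_of m r i hr.1 hr.2
      refine ⟨⟨p, hpn⟩, ?_, hp1⟩
      simp only [coe_filter, Set.mem_setOf_eq, mem_univ, true_and]
      refine ⟨?_, hnf⟩
      rw [rgfOf_rep f m n ⟨p, hpn⟩ hnf]
      simp only [Fin.val_mk]
      rw [hp1, hjeq]
  have hsplit := Finset.card_filter_add_card_filter_not
    (s := A) (p := fun p : Fin n => ∃ i' : Fin k, f i' = (p : ℕ) + 1)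
  rw [h1, Finset.card_singleton] at hsplit
  omega

end construction

/-- forward direction -/
lemma forward_aux {n : ℕ} (hkn : k ≤ n) (hf : StrictMono f) (hm : ∑ i, m i = n - k)
    (ρ : Fin n → ℕ)
    (hfirst : ∀ i : Fin k, ∃ p : Fin n, (p : ℕ) + 1 = f i ∧ ρ p = (i : ℕ) + 1 ∧
      ∀ q : Fin n, q < p → ρ q ≠ (i : ℕ) + 1)
    (hcount : ∀ i : Fin k, (univ.filter fun p : Fin n => ρ p = (i : ℕ) + 1).card = m i + 1) :
    ∀ i : Fin k, 1 ≤ (i : ℕ) → f i - ((i : ℕ) + 1) ≤ ∑ j ∈ univ.filter (· < i), m j := by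
  classical
  intro i hi
  set T : Fin k → Finset (Fin n) := fun j => univ.filter fun p => ρ p = (j : ℕ) + 1 with hT
  have hUcard : (univ.biUnion T).card = ∑ j, (T j).card := by
    apply Finset.card_biUnion
    intro x _ y _ hxy
    apply Finset.disjoint_left.mpr
    intro p hp hq
    simp only [hT, mem_filter, mem_univ, true_and] at hp hq
    exact hxy (Fin.ext (by omega))
  have hsum : ∑ j, (T j).card = n := by
    simp only [hT, hcount]
    rw [Finset.sum_add_distrib, hm, Finset.sum_const, card_univ, Fintype.card_fin,
      smul_eq_mul, mul_one]
    omega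
  have hU : univ.biUnion T = univ :=
    Finset.eq_univ_of_card _ (by rw [hUcard, hsum, Fintype.card_fin])
  have hcover : ∀ p : Fin n, ∃ j : Fin k, ρ p = (j : ℕ) + 1 := by
    intro p
    have : p ∈ univ.biUnion T := hU ▸ mem_univ p
    obtain ⟨j, _, hj⟩ := Finset.mem_biUnion.mp this
    simp only [hT, mem_filter, mem_univ, true_and] at hj
    exact ⟨j, hj⟩
  obtain ⟨pi, hpi1, _, _⟩ := hfirst i
  have hfin : f i ≤ n := by have := pi.isLt; omega
  set Aset := univ.filter (fun p : Fin n => (p : ℕ) + 1 < f i) with hAset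
  have hAcard : Aset.card = f i - 1 := by
    rw [show f i - 1 = (Finset.range (f i - 1)).card from (Finset.card_range _).symm]
    apply Finset.card_nbij (fun p : Fin n => (p : ℕ))
    · intro p hp
      simp only [hAset, mem_coe, mem_filter, mem_univ, true_and] at hp
      simp only [mem_coe, mem_range]
      omega
    · intro p _ q _ hpq
      exact Fin.ext hpq
    · intro q hq
      simp only [coe_range, Set.mem_Iio] at hq
      refine ⟨⟨q, by omega⟩, ?_, rfl⟩
      simp only [hAset, coe_filter, Set.mem_setOf_eq, mem_univ, true_and, Fin.val_mk]
      omega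
  have hsub : Aset ⊆ (univ.filter (· < i)).biUnion T := by
    intro p hp
    simp only [hAset, mem_filter, mem_univ, true_and] at hp
    obtain ⟨j, hj⟩ := hcover p
    have hji : j < i := by
      by_contra hge
      push_neg at hge
      obtain ⟨pj, hpj1, _, hpj3⟩ := hfirst j
      have hmono : f i ≤ f j := hf.monotone hge
      have : p < pj := by simp only [Fin.lt_def]; omega
      exact hpj3 p this hj
    apply Finset.mem_biUnion.mpr
    exact ⟨j, by simp [hji], by simp [hT, hj]⟩
  have hcard2 : Aset.card ≤ ∑ j ∈ univ.filter (· < i), (T j).card :=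
    le_trans (card_le_card hsub) Finset.card_biUnion_le
  have hsum2 : ∑ j ∈ univ.filter (· < i), (T j).card
      = (∑ j ∈ univ.filter (· < i), m j) + (i : ℕ) := by
    simp only [hT, hcount]
    rw [Finset.sum_add_distrib, Finset.sum_const, card_filter_lt, smul_eq_mul, mul_one]
  omega

end RGFAux

theorem rgf_exists_iff (n k : ℕ) (hk : 1 ≤ k) (hkn : k ≤ n)
    (f : Fin k → ℕ) (hf : StrictMono f) (hf1 : ∀ i : Fin k, (i : ℕ) = 0 → f i = 1)
    (m : Fin k → ℕ) (hm : ∑ i, m i = n - k) :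
    (∃ ρ : Fin n → ℕ, IsRGF ρ ∧
        -- the first occurrence of the value `i+1` is at (1-indexed) position `f i`
        (∀ i : Fin k, ∃ p : Fin n, (p : ℕ) + 1 = f i ∧ ρ p = (i : ℕ) + 1 ∧
          ∀ q : Fin n, q < p → ρ q ≠ (i : ℕ) + 1) ∧
        -- besides its first occurrence, the value `i+1` occurs `m i` more times
        (∀ i : Fin k, (univ.filter fun p : Fin n => ρ p = (i : ℕ) + 1).card = m i + 1)) ↔
      ∀ i : Fin k, 1 ≤ (i : ℕ) →
        f i - ((i : ℕ) + 1) ≤ ∑ j ∈ univ.filter (· < i), m j := by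
  constructor
  · rintro ⟨ρ, -, hfirst, hcount⟩
    exact RGFAux.forward_aux f m hkn hf hm ρ hfirst hcount
  · intro H
    have H' : ∀ i : Fin k, 1 ≤ (i : ℕ) → f i - ((i : ℕ) + 1) ≤ RGFAux.Spre m i := H
    exact ⟨RGFAux.rgfOf f m n,
      RGFAux.rgfOf_isRGF f m hf n hk hkn hf1 hm H',
      RGFAux.rgfOf_first_occ f m hf n hk hkn hf1 hm H',
      RGFAux.rgfOf_count f m hf n hk hkn hf1 hm H'⟩
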